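/- If Λ = p + iq (p, q real, c ≠ 0) satisfies the dispersion relation 2(cosh Λ − 1) + h² − c²Λ² = 0, then the imaginary part is bounded by the real part: q² ≤ p² + (4/c²)·cosh²(p/2). -/
import Mathlib


open Complex

theorem dispersion_imaginary_part_bound (c h p q : ℝ) (hc : c ≠ 0)
    (hroot : 2 * (Complex.cosh (p + q * Complex.I) - 1) + (h : ℂ)^2
      - (c : ℂ)^2 * (p + q * Complex.I)^2 = 0) :
    q^2 ≤ p^2 + (4 / c^2) * (Real.cosh (p / 2))^2 := by
  rw [Complex.cosh_add, Complex.cosh_mul_I, Complex.sinh_mul_I] at hroot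
  have hre := congrArg Complex.re hroot
  simp [Complex.add_re, Complex.mul_re, Complex.cosh_ofReal_re, Complex.sinh_ofReal_re,
    Complex.cos_ofReal_re, Complex.sin_ofReal_re, pow_two] at hre
  have hc2 : (0:ℝ) < c^2 := by positivity
  have hcosp : Real.cosh p = 2 * Real.cosh (p/2)^2 - 1 := by
    have h1 := Real.cosh_two_mul (p/2)
    have h2 := Real.sinh_sq (p/2)
    rw [show 2*(p/2) = p by ring] at h1
    linarith
  have h1 : Real.cos q ≥ -1 := Real.neg_one_le_cos q
  have h2 : (0:ℝ) ≤ Real.cosh p := (Real.cosh_pos p).le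
  have key : (q^2 - p^2) * c^2 ≤ 4 * Real.cosh (p/2)^2 := by
    nlinarith [mul_nonneg h2 (by linarith : (0:ℝ) ≤ Real.cos q + 1), sq_nonneg h]
  have h4 : q^2 - p^2 ≤ 4 * Real.cosh (p/2)^2 / c^2 := (le_div_iff₀ hc2).mpr key
  have : 4 / c^2 * Real.cosh (p/2)^2 = 4 * Real.cosh (p/2)^2 / c^2 := by ring
  linarith [this ▸ h4]
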